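/- In G(E), nonzero elements uv⁻¹ and xy⁻¹ are J-related if and only if r(u) and r(x) lie in the same strongly connected component of E; consequently the nonzero J-classes of G(E) are in bijection with the strongly connected components of E. -/

import Mathlib

universe u

/-- A directed graph: vertices, edges, source and range maps. -/
structure DGraph : Type (u + 1) where
  V : Type u
  Ed : Type u
  src : Ed → V
  rng : Ed → V

/-- The end vertex of a list of edges started at `v` (ignoring composability). -/
def DGraph.ranAux (G : DGraph) : G.V → List G.Ed → G.V
  | v, [] => v
  | _, e :: es => DGraph.ranAux G (G.rng e) es

/-- The edges `l` form a composable path starting at `v`. -/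
def DGraph.Chain (G : DGraph) : G.V → List G.Ed → Prop
  | _, [] => True
  | v, e :: es => G.src e = v ∧ DGraph.Chain G (G.rng e) es

theorem DGraph.ranAux_append (G : DGraph) (v : G.V) (l1 l2 : List G.Ed) :
    G.ranAux v (l1 ++ l2) = G.ranAux (G.ranAux v l1) l2 := by
  induction l1 generalizing v with
  | nil => rfl
  | cons e es ih => exact ih (G.rng e)

theorem DGraph.chain_append (G : DGraph) {v : G.V} {l1 l2 : List G.Ed}
    (h1 : G.Chain v l1) (h2 : G.Chain (G.ranAux v l1) l2) : G.Chain v (l1 ++ l2) := by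
  induction l1 generalizing v with
  | nil => exact h2
  | cons e es ih => exact ⟨h1.1, ih h1.2 h2⟩

theorem DGraph.chain_append_right (G : DGraph) {v : G.V} {l1 l2 : List G.Ed}
    (h : G.Chain v (l1 ++ l2)) : G.Chain (G.ranAux v l1) l2 := by
  induction l1 generalizing v with
  | nil => exact h
  | cons e es ih => exact ih h.2

/-- A (finite, directed) path in the graph `G`: a start vertex together
with a composable list of edges. Vertices are the paths of length `0`. -/
structure GPath (G : DGraph.{u}) : Type u where
  start : G.V
  edges : List G.Ed
  chain : G.Chain start edges

namespace GPath

variable {G : DGraph}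

/-- The range (end vertex) of a path. -/
def ran (p : GPath G) : G.V := G.ranAux p.start p.edges

/-- The path of length zero at a vertex. -/
def ofVertex (G : DGraph) (v : G.V) : GPath G := ⟨v, [], trivial⟩

/-- The path of length one given by an edge. -/
def ofEdge (G : DGraph) (e : G.Ed) : GPath G := ⟨G.src e, [e], ⟨rfl, trivial⟩⟩

@[simp] theorem ofVertex_ran (G : DGraph) (v : G.V) : (ofVertex G v).ran = v := rfl

@[simp] theorem ofEdge_ran (G : DGraph) (e : G.Ed) : (ofEdge G e).ran = G.rng e := rfl

/-- Concatenation of composable paths. -/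
def append (p q : GPath G) (h : p.ran = q.start) : GPath G :=
  ⟨p.start, p.edges ++ q.edges,
    G.chain_append p.chain (by
      show G.Chain (G.ranAux p.start p.edges) q.edges
      have : G.ranAux p.start p.edges = q.start := h
      rw [this]; exact q.chain)⟩

@[simp] theorem append_ran (p q : GPath G) (h : p.ran = q.start) :
    (p.append q h).ran = q.ran := by
  show G.ranAux p.start (p.edges ++ q.edges) = q.ran
  rw [G.ranAux_append]
  have : G.ranAux p.start p.edges = q.start := h
  rw [this]; rfl

/-- `y` is an initial segment of the path `p`. -/
def IsPrefixOf (y p : GPath G) : Prop := y.start = p.start ∧ y.edges <+: p.edges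

/-- The remainder `t` of `p` after its initial segment `y`, so that `p = y ++ t`. -/
def remainder (y p : GPath G) (h : y.IsPrefixOf p) : GPath G :=
  ⟨y.ran, p.edges.drop y.edges.length, by
    obtain ⟨l2, hl⟩ := h.2
    rw [← hl, List.drop_left]
    show G.Chain (G.ranAux y.start y.edges) l2
    rw [h.1]
    exact G.chain_append_right (v := p.start) (l1 := y.edges) (l2 := l2)
      (by rw [hl]; exact p.chain)⟩

@[simp] theorem remainder_ran (y p : GPath G) (h : y.IsPrefixOf p) :
    (y.remainder p h).ran = p.ran := by
  obtain ⟨l2, hl⟩ := h.2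
  show G.ranAux y.ran (p.edges.drop y.edges.length) = p.ran
  rw [← hl, List.drop_left]
  show G.ranAux (G.ranAux y.start y.edges) l2 = p.ran
  rw [h.1, ← G.ranAux_append, hl]
  rfl

end GPath

/-- The graph inverse semigroup of `G` (in normal form): its elements are zero together
with the elements `x * y⁻¹` for paths `x`, `y` with the same range. -/
inductive GIS (G : DGraph.{u}) : Type u where
  | zero : GIS G
  | mk (x y : GPath G) (h : x.ran = y.ran) : GIS G

instance (G : DGraph) : Zero (GIS G) := ⟨GIS.zero⟩

open scoped Classical in
/-- Multiplication in the graph inverse semigroup. -/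
noncomputable def GIS.gmul {G : DGraph} : GIS G → GIS G → GIS G
  | GIS.zero, _ => GIS.zero
  | GIS.mk _ _ _, GIS.zero => GIS.zero
  | GIS.mk x y hxy, GIS.mk p q hpq =>
    if h1 : y.IsPrefixOf p then
      GIS.mk (x.append (y.remainder p h1) hxy) q
        (by exact (GPath.append_ran _ _ _).trans ((GPath.remainder_ran _ _ _).trans hpq))
    else if h2 : p.IsPrefixOf y then
      GIS.mk x (q.append (p.remainder y h2) hpq.symm)
        (by exact hxy.trans ((GPath.append_ran _ _ _).trans (GPath.remainder_ran _ _ _)).symm)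
    else GIS.zero

noncomputable instance (G : DGraph) : Mul (GIS G) := ⟨GIS.gmul⟩

/-- The element of `GIS G` corresponding to a vertex `v` (i.e. `v = v * v⁻¹`). -/
def vertexEl (G : DGraph) (v : G.V) : GIS G :=
  GIS.mk (GPath.ofVertex G v) (GPath.ofVertex G v) rfl

/-- The element of `GIS G` corresponding to an edge `e` (i.e. `e = e * r(e)⁻¹`). -/
def edgeEl (G : DGraph) (e : G.Ed) : GIS G :=
  GIS.mk (GPath.ofEdge G e) (GPath.ofVertex G (G.rng e)) rfl

/-- The inverse operation on `GIS G`: `(x y⁻¹)⁻¹ = y x⁻¹`. -/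
def GIS.inv {G : DGraph} : GIS G → GIS G
  | GIS.zero => GIS.zero
  | GIS.mk x y h => GIS.mk y x h.symm

/-- `a` lies in the principal left ideal generated by `b` (`S¹a ⊆ S¹b`). -/
def GreenLeL {G : DGraph} (a b : GIS G) : Prop := a = b ∨ ∃ c, a = c * b

/-- `a` lies in the principal right ideal generated by `b` (`aS¹ ⊆ bS¹`). -/
def GreenLeR {G : DGraph} (a b : GIS G) : Prop := a = b ∨ ∃ c, a = b * c

/-- `a` lies in the principal two-sided ideal generated by `b` (`S¹aS¹ ⊆ S¹bS¹`). -/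
def GreenLeJ {G : DGraph} (a b : GIS G) : Prop :=
  a = b ∨ (∃ c, a = c * b) ∨ (∃ c, a = b * c) ∨ (∃ c d, a = c * b * d)

/-- Green's `L`-relation. -/
def GreenEqL {G : DGraph} (a b : GIS G) : Prop := GreenLeL a b ∧ GreenLeL b a

/-- Green's `R`-relation. -/
def GreenEqR {G : DGraph} (a b : GIS G) : Prop := GreenLeR a b ∧ GreenLeR b a

/-- Green's `J`-relation. -/
def GreenEqJ {G : DGraph} (a b : GIS G) : Prop := GreenLeJ a b ∧ GreenLeJ b a

/-- There is a (possibly trivial) directed path from `v` to `w` in `G`. -/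
def GConnected (G : DGraph) (v w : G.V) : Prop := ∃ t : GPath G, t.start = v ∧ t.ran = w

/-- `I` is a (two-sided) ideal of `GIS G`. -/
def GISIdeal {G : DGraph} (I : Set (GIS G)) : Prop :=
  ∀ a ∈ I, ∀ c : GIS G, a * c ∈ I ∧ c * a ∈ I

/-- `R` is the Rees congruence of some ideal `I`, i.e. `R = (I × I) ∪ Δ`. -/
def IsReesCon {G : DGraph} (R : Con (GIS G)) : Prop :=
  ∃ I : Set (GIS G), GISIdeal I ∧ ∀ a b : GIS G, R a b ↔ (a ∈ I ∧ b ∈ I) ∨ a = b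

/-- The only congruences on `GIS G` are the universal one and the diagonal. -/
def CongFree (G : DGraph) : Prop :=
  ∀ R : Con (GIS G), (∀ a b : GIS G, R a b) ∨ (∀ a b : GIS G, R a b ↔ a = b)

/-- The natural partial order on the inverse semigroup `GIS G`:
`a ≤ b` iff `a = ε * b` for some idempotent `ε`. -/
def natLe {G : DGraph} (a b : GIS G) : Prop := ∃ ε : GIS G, ε * ε = ε ∧ a = ε * b

/-- The graph obtained from `G` by deleting the vertices in `S` and all
edges incident to them. -/
def DGraph.delete (G : DGraph) (S : Set G.V) : DGraph where
  V := {v : G.V // v ∉ S}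
  Ed := {e : G.Ed // G.src e ∉ S ∧ G.rng e ∉ S}
  src e := ⟨G.src e.1, e.2.1⟩
  rng e := ⟨G.rng e.1, e.2.2⟩

/-- The graph with a single vertex and `n` loops; its graph inverse semigroup
is the polycyclic monoid `Pₙ`. -/
def polyGraph (n : ℕ) : DGraph :=
  ⟨PUnit, Fin n, fun _ => PUnit.unit, fun _ => PUnit.unit⟩

section Helpers

variable {G : DGraph}

theorem GPath.ext' {p q : GPath G} (h1 : p.start = q.start) (h2 : p.edges = q.edges) :
    p = q := by
  cases p; cases q; cases h1; cases h2; rfl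

theorem GIS.mk_eq {x y x' y' : GPath G} {h : x.ran = y.ran} {h' : x'.ran = y'.ran}
    (e1 : x = x') (e2 : y = y') : GIS.mk x y h = GIS.mk x' y' h' := by
  subst e1; subst e2; rfl

theorem GConnected.refl (v : G.V) : GConnected G v v := ⟨⟨v, [], trivial⟩, rfl, rfl⟩

theorem GConnected.trans {v w z : G.V} (h1 : GConnected G v w) (h2 : GConnected G w z) :
    GConnected G v z := by
  obtain ⟨t1, h1s, h1r⟩ := h1
  obtain ⟨t2, h2s, h2r⟩ := h2
  refine ⟨t1.append t2 (h1r.trans h2s.symm), h1s, ?_⟩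
  rw [GPath.append_ran]; exact h2r

open scoped Classical in
theorem GIS.gmul_def (x y p q : GPath G) (hxy : x.ran = y.ran) (hpq : p.ran = q.ran) :
    GIS.mk x y hxy * GIS.mk p q hpq =
      if h1 : y.IsPrefixOf p then
        GIS.mk (x.append (y.remainder p h1) hxy) q
          (by exact (GPath.append_ran _ _ _).trans ((GPath.remainder_ran _ _ _).trans hpq))
      else if h2 : p.IsPrefixOf y then
        GIS.mk x (q.append (p.remainder y h2) hpq.symm)
          (by exact hxy.trans ((GPath.append_ran _ _ _).trans (GPath.remainder_ran _ _ _)).symm)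
      else GIS.zero := rfl

theorem GIS.zero_gmul (a : GIS G) : (GIS.zero : GIS G) * a = GIS.zero := rfl

theorem GIS.gmul_zero (a : GIS G) : a * (GIS.zero : GIS G) = GIS.zero := by
  cases a <;> rfl

/-- Multiplying `a b⁻¹` by `(b t) c⁻¹` gives `(a t) c⁻¹`. -/
theorem GIS.mul_ext {a b t c : GPath G} (hab : a.ran = b.ran) (h : b.ran = t.start)
    (h2 : (b.append t h).ran = c.ran) (h3 : (a.append t (hab.trans h)).ran = c.ran) :
    GIS.mk a b hab * GIS.mk (b.append t h) c h2
      = GIS.mk (a.append t (hab.trans h)) c h3 := by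
  rw [GIS.gmul_def]
  have hpre : b.IsPrefixOf (b.append t h) := ⟨rfl, ⟨t.edges, rfl⟩⟩
  rw [dif_pos hpre]
  refine GIS.mk_eq (GPath.ext' rfl ?_) rfl
  show a.edges ++ List.drop b.edges.length (b.edges ++ t.edges) = a.edges ++ t.edges
  rw [List.drop_left]

/-- `(a b⁻¹)(b c⁻¹) = a c⁻¹`. -/
theorem GIS.mul_cancel {a b c : GPath G} (hab : a.ran = b.ran) (hbc : b.ran = c.ran) :
    GIS.mk a b hab * GIS.mk b c hbc = GIS.mk a c (hab.trans hbc) := by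
  rw [GIS.gmul_def]
  have hpre : b.IsPrefixOf b := ⟨rfl, List.prefix_refl _⟩
  rw [dif_pos hpre]
  refine GIS.mk_eq (GPath.ext' rfl ?_) rfl
  show a.edges ++ List.drop b.edges.length b.edges = a.edges
  rw [List.drop_length, List.append_nil]

/-- Multiplying `u ((x t)⁻¹)` by `x y⁻¹` gives `u (y t)⁻¹`. -/
theorem GIS.mul_ext' {u x y t : GPath G} (h : x.ran = t.start) (hxy : x.ran = y.ran)
    (h1 : u.ran = (x.append t h).ran) (h2 : u.ran = (y.append t (hxy.symm.trans h)).ran) :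
    GIS.mk u (x.append t h) h1 * GIS.mk x y hxy
      = GIS.mk u (y.append t (hxy.symm.trans h)) h2 := by
  rw [GIS.gmul_def]
  by_cases hc : (x.append t h).IsPrefixOf x
  · have hlen : t.edges = [] := by
      have hle := List.IsPrefix.length_le hc.2
      have he : (x.append t h).edges.length = x.edges.length + t.edges.length := by
        show (x.edges ++ t.edges).length = _
        rw [List.length_append]
      rw [he] at hle
      exact List.eq_nil_of_length_eq_zero (by omega)
    rw [dif_pos hc]
    refine GIS.mk_eq (GPath.ext' rfl ?_) (GPath.ext' rfl ?_)
    · show u.edges ++ List.drop (x.append t h).edges.length x.edges = u.edges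
      have : (x.append t h).edges = x.edges := by
        show x.edges ++ t.edges = x.edges
        rw [hlen, List.append_nil]
      rw [this, List.drop_length, List.append_nil]
    · show y.edges = y.edges ++ t.edges
      rw [hlen, List.append_nil]
  · rw [dif_neg hc]
    have hpre : x.IsPrefixOf (x.append t h) := ⟨rfl, ⟨t.edges, rfl⟩⟩
    rw [dif_pos hpre]
    refine GIS.mk_eq rfl (GPath.ext' rfl ?_)
    show y.edges ++ List.drop x.edges.length (x.edges ++ t.edges) = y.edges ++ t.edges
    rw [List.drop_left]

/-- If a path `t` runs from `r(x)` to `r(u)`, then `u v⁻¹ ≤_J x y⁻¹`. -/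
theorem leJ_of_path {u v x y : GPath G} (hu : u.ran = v.ran) (hxy : x.ran = y.ran)
    (t : GPath G) (hts : t.start = x.ran) (htr : t.ran = u.ran) :
    GreenLeJ (GIS.mk u v hu) (GIS.mk x y hxy) := by
  right; right; right
  have h : x.ran = t.start := hts.symm
  have h' : y.ran = t.start := hxy.symm.trans h
  have hc1 : u.ran = (x.append t h).ran := by rw [GPath.append_ran, htr]
  have hc2 : u.ran = (y.append t h').ran := by rw [GPath.append_ran, htr]
  have hd : (y.append t h').ran = v.ran := by rw [GPath.append_ran, htr, hu]
  refine ⟨GIS.mk u (x.append t h) hc1, GIS.mk (y.append t h') v hd, ?_⟩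
  rw [GIS.mul_ext' h hxy hc1 hc2, GIS.mul_cancel]

/-- If `a (x y⁻¹) = u v⁻¹ ≠ 0`, then there is a path from `r(x)` to `r(u)`. -/
theorem conn_of_mul_left {a : GIS G} {u v x y : GPath G} {hu : u.ran = v.ran}
    {hxy : x.ran = y.ran} (h : a * GIS.mk x y hxy = GIS.mk u v hu) :
    GConnected G x.ran u.ran := by
  cases a with
  | zero => exact absurd h (by rw [GIS.zero_gmul]; intro hh; cases hh)
  | mk p q hpq =>
    rw [GIS.gmul_def] at h
    split_ifs at h with h1 h2
    · injection h with e1 e2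
      have : u.ran = x.ran := by rw [hu, ← e2, ← hxy]
      exact this ▸ GConnected.refl x.ran
    · injection h with e1 e2
      refine ⟨x.remainder q h2, rfl, ?_⟩
      rw [GPath.remainder_ran, hu, ← e2]; exact ((GPath.append_ran _ _ _).trans (GPath.remainder_ran _ _ _)).symm

/-- If `(x y⁻¹) a = u v⁻¹ ≠ 0`, then there is a path from `r(x)` to `r(u)`. -/
theorem conn_of_mul_right {a : GIS G} {u v x y : GPath G} {hu : u.ran = v.ran}
    {hxy : x.ran = y.ran} (h : GIS.mk x y hxy * a = GIS.mk u v hu) :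
    GConnected G x.ran u.ran := by
  cases a with
  | zero => exact absurd h (by rw [GIS.gmul_zero]; intro hh; cases hh)
  | mk p q hpq =>
    rw [GIS.gmul_def] at h
    split_ifs at h with h1 h2
    · injection h with e1 e2
      refine ⟨y.remainder p h1, hxy.symm, ?_⟩
      rw [GPath.remainder_ran, ← e1]; exact ((GPath.append_ran _ _ _).trans (GPath.remainder_ran _ _ _)).symm
    · injection h with e1 e2
      have : x.ran = u.ran := by rw [← e1]
      exact this ▸ GConnected.refl x.ran

theorem conn_of_leJ {u v x y : GPath G} {hu : u.ran = v.ran} {hxy : x.ran = y.ran}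
    (h : GreenLeJ (GIS.mk u v hu) (GIS.mk x y hxy)) : GConnected G x.ran u.ran := by
  rcases h with h | ⟨c, h⟩ | ⟨c, h⟩ | ⟨c, d, h⟩
  · injection h with e1 e2
    exact e1 ▸ GConnected.refl x.ran
  · exact conn_of_mul_left h.symm
  · exact conn_of_mul_right h.symm
  · rcases hm : c * GIS.mk x y hxy with _ | ⟨u', v', hu'⟩
    · rw [hm, GIS.zero_gmul] at h; cases h
    · rw [hm] at h
      exact (conn_of_mul_left hm).trans (conn_of_mul_right h.symm)

theorem main_iff (u v x y : GPath G) (hu : u.ran = v.ran) (hx : x.ran = y.ran) :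
    GreenEqJ (GIS.mk u v hu) (GIS.mk x y hx) ↔
      (GConnected G u.ran x.ran ∧ GConnected G x.ran u.ran) := by
  constructor
  · rintro ⟨h1, h2⟩
    exact ⟨conn_of_leJ h2, conn_of_leJ h1⟩
  · rintro ⟨⟨t1, ht1s, ht1r⟩, ⟨t2, ht2s, ht2r⟩⟩
    exact ⟨leJ_of_path hu hx t2 ht2s ht2r, leJ_of_path hx hu t1 ht1s ht1r⟩

/-- The range vertex of a nonzero element of `GIS G`. -/
noncomputable def GIS.rvert : {mu : GIS G // mu ≠ 0} → G.V := fun mu =>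
  match mu with
  | ⟨GIS.zero, h⟩ => absurd rfl h
  | ⟨GIS.mk u _ _, _⟩ => u.ran

end Helpers

/-- Nonzero elements `uv⁻¹` and `xy⁻¹` of `G(E)` are `J`-related iff
`r(u)` and `r(x)` lie in the same strongly connected component of `E`; consequently the
nonzero `J`-classes of `G(E)` are in bijection with the strongly connected components
of `E`. -/
theorem stmt7 (G : DGraph) :
    (∀ (u v x y : GPath G) (hu : u.ran = v.ran) (hx : x.ran = y.ran),
      GreenEqJ (GIS.mk u v hu) (GIS.mk x y hx) ↔
        (GConnected G u.ran x.ran ∧ GConnected G x.ran u.ran)) ∧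
    ∃ F : {mu : GIS G // mu ≠ 0} → G.V,
      (∀ mu nu : {mu : GIS G // mu ≠ 0},
        (GConnected G (F mu) (F nu) ∧ GConnected G (F nu) (F mu)) ↔ GreenEqJ mu.1 nu.1) ∧
      (∀ v : G.V, ∃ mu : {mu : GIS G // mu ≠ 0},
        GConnected G (F mu) v ∧ GConnected G v (F mu)) := by
  refine ⟨main_iff, GIS.rvert, ?_, ?_⟩
  · rintro ⟨mu, hmu⟩ ⟨nu, hnu⟩
    cases mu with
    | zero => exact absurd rfl hmu
    | mk u v hu =>
      cases nu with
      | zero => exact absurd rfl hnu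
      | mk x y hx =>
        show (GConnected G u.ran x.ran ∧ GConnected G x.ran u.ran) ↔ _
        exact (main_iff u v x y hu hx).symm
  · intro v
    refine ⟨⟨GIS.mk (GPath.ofVertex G v) (GPath.ofVertex G v) rfl, fun h => ?_⟩, ?_, ?_⟩
    · cases h
    · exact GConnected.refl v
    · exact GConnected.refl v
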